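/- Under the hypotheses of the Frobenius-norm Jacobian model error bound — namely: F : ℝⁿ → ℝᵐ differentiable with Jacobian J, each ∇F⁽ⁱ⁾ κ_lg-Lipschitz and s-sparse at x; σ > 0; v¹, …, v^p ∈ ℝⁿ with ‖vʲ‖ ≤ κ_bv; A ∈ ℝ^{p×n} with rows (vʲ)ᵀ having the s-sparse ℓ1-recovery property with constant c₁ > 0; y⁽ⁱ⁾ ∈ ℝ^p with entries F⁽ⁱ⁾(x + σvʲ) − F⁽ⁱ⁾(x); each g⁽ⁱ⁾ a minimizer of ‖g‖₁ over {g : ‖Ag − σ⁻¹y⁽ⁱ⁾‖ ≤ (√p/2) κ_lg κ_bv² σ}; and J_m the matrix with rows (g⁽ⁱ⁾)ᵀ — suppose in addition that σ ≤ γ₂/θ for some θ > 0 and γ₂ > 0. Then ‖J_m − J(x)‖ ≤ κ_ej/θ in the spectral norm, where κ_ej = (√(mp)/2) c₁ γ₂ κ_lg κ_bv². -/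

import Mathlib

open Filter Matrix MeasureTheory

/-- The map `x ↦ A x` from `ℝⁿ` to `ℝᵖ` with the Euclidean (`ℓ²`) structure. -/
noncomputable def mulVecE {p n : ℕ} (A : Matrix (Fin p) (Fin n) ℝ)
    (x : EuclideanSpace ℝ (Fin n)) : EuclideanSpace ℝ (Fin p) :=
  (WithLp.equiv 2 (Fin p → ℝ)).symm (A.mulVec ((WithLp.equiv 2 (Fin n → ℝ)) x))

/-- The spectral norm (ℓ²-operator norm) of a matrix. -/
noncomputable def opNorm {p n : ℕ} (A : Matrix (Fin p) (Fin n) ℝ) : ℝ :=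
  sSup {r : ℝ | ∃ x : EuclideanSpace ℝ (Fin n), ‖x‖ ≤ 1 ∧ r = ‖mulVecE A x‖}

/-- The `i`-th row of a matrix, as a Euclidean vector. -/
noncomputable def rowE {m n : ℕ} (A : Matrix (Fin m) (Fin n) ℝ) (i : Fin m) :
    EuclideanSpace ℝ (Fin n) :=
  (WithLp.equiv 2 (Fin n → ℝ)).symm (A i)

/-- The `ℓ¹` norm on `ℝⁿ`. -/
noncomputable def oneNorm {n : ℕ} (x : EuclideanSpace ℝ (Fin n)) : ℝ :=
  ∑ i, |x i|

/-- `x` is `s`-sparse: it has at most `s` nonzero entries. -/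
def IsSparse {n : ℕ} (s : ℕ) (x : EuclideanSpace ℝ (Fin n)) : Prop :=
  (Finset.univ.filter fun i => x i ≠ 0).card ≤ s

/-- `A` has the `s`-sparse `ℓ¹`-recovery property with constant `c₁`. -/
def RecoveryProperty {p n : ℕ} (s : ℕ) (A : Matrix (Fin p) (Fin n) ℝ)
    (c₁ : ℝ) : Prop :=
  ∀ xhat : EuclideanSpace ℝ (Fin n), IsSparse s xhat →
    ∀ ξ : ℝ, 0 ≤ ξ →
      ∀ y : EuclideanSpace ℝ (Fin p), ‖mulVecE A xhat - y‖ ≤ ξ →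
        ∀ xstar : EuclideanSpace ℝ (Fin n), ‖mulVecE A xstar - y‖ ≤ ξ →
          (∀ x : EuclideanSpace ℝ (Fin n), ‖mulVecE A x - y‖ ≤ ξ →
            oneNorm xstar ≤ oneNorm x) →
          ‖xstar - xhat‖ ≤ c₁ * ξ


open scoped InnerProductSpace

private lemma quad_bound_aux {n : ℕ} (f : EuclideanSpace ℝ (Fin n) → ℝ)
    (grad : EuclideanSpace ℝ (Fin n) → EuclideanSpace ℝ (Fin n))
    (hf : ∀ z, HasGradientAt f (grad z) z)
    (κ : ℝ) (hκ : 0 ≤ κ)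
    (hlip : ∀ y z, ‖grad y - grad z‖ ≤ κ * ‖y - z‖)
    (x u : EuclideanSpace ℝ (Fin n)) :
    |f (x + u) - f x - ⟪grad x, u⟫_ℝ| ≤ κ / 2 * ‖u‖ ^ 2 := by
  set ψ' : ℝ → ℝ := fun t => ⟪grad (x + t • u), u⟫_ℝ - ⟪grad x, u⟫_ℝ with hψ'
  have hgc : Continuous grad := by
    have : LipschitzWith κ.toNNReal grad := by
      apply LipschitzWith.of_dist_le_mul
      intro a b
      simpa [dist_eq_norm, Real.coe_toNNReal κ hκ] using hlip a b
    exact this.continuous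
  have hcont : Continuous ψ' := by
    apply Continuous.sub _ continuous_const
    exact Continuous.inner (hgc.comp (by continuity)) continuous_const
  have hderiv : ∀ t ∈ Set.uIcc (0:ℝ) 1,
      HasDerivAt (fun t : ℝ => f (x + t • u) - t * ⟪grad x, u⟫_ℝ) (ψ' t) t := by
    intro t _
    have hline : HasDerivAt (fun t : ℝ => x + t • u) u t := by
      simpa using ((hasDerivAt_id t).smul_const u).const_add x
    have h1 : HasDerivAt (fun t : ℝ => f (x + t • u)) (⟪grad (x + t • u), u⟫_ℝ) t := by
      have := (hf (x + t • u)).hasFDerivAt.comp_hasDerivAt t hline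
      simpa [InnerProductSpace.toDual_apply_apply, Function.comp_def] using this
    have h2 : HasDerivAt (fun t : ℝ => t * ⟪grad x, u⟫_ℝ) (⟪grad x, u⟫_ℝ) t := by
      simpa using (hasDerivAt_id t).mul_const (⟪grad x, u⟫_ℝ)
    exact h1.sub h2
  have key : ∫ t in (0:ℝ)..1, ψ' t =
      (f (x + u) - 1 * ⟪grad x, u⟫_ℝ) - (f (x + (0:ℝ) • u) - 0 * ⟪grad x, u⟫_ℝ) := by
    have := intervalIntegral.integral_eq_sub_of_hasDerivAt hderiv
      (hcont.intervalIntegrable 0 1)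
    simpa using this
  have habs : |∫ t in (0:ℝ)..1, ψ' t| ≤ ∫ t in (0:ℝ)..1, κ * ‖u‖ ^ 2 * t := by
    calc |∫ t in (0:ℝ)..1, ψ' t| ≤ ∫ t in (0:ℝ)..1, |ψ' t| := by
          simpa [Real.norm_eq_abs] using
            intervalIntegral.norm_integral_le_integral_norm (f := ψ') (μ := volume) zero_le_one
      _ ≤ ∫ t in (0:ℝ)..1, κ * ‖u‖ ^ 2 * t := by
          apply intervalIntegral.integral_mono_on zero_le_one
            (hcont.abs.intervalIntegrable 0 1) (by apply Continuous.intervalIntegrable; continuity)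
          intro t ht
          have hrw : ψ' t = ⟪grad (x + t • u) - grad x, u⟫_ℝ := by
            rw [hψ']; rw [inner_sub_left]
          rw [hrw]
          calc |⟪grad (x + t • u) - grad x, u⟫_ℝ| ≤ ‖grad (x + t • u) - grad x‖ * ‖u‖ :=
                abs_real_inner_le_norm _ _
            _ ≤ (κ * ‖t • u‖) * ‖u‖ := by
                apply mul_le_mul_of_nonneg_right _ (norm_nonneg _)
                simpa using hlip (x + t • u) x
            _ = κ * ‖u‖ ^ 2 * t := by
                rw [norm_smul, Real.norm_eq_abs, abs_of_nonneg ht.1]; ring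
  have hval : ∫ t in (0:ℝ)..1, κ * ‖u‖ ^ 2 * t = κ / 2 * ‖u‖ ^ 2 := by
    rw [intervalIntegral.integral_const_mul, integral_id]; ring
  rw [hval] at habs
  rw [key] at habs
  have heq : f (x + u) - f x - ⟪grad x, u⟫_ℝ =
      (f (x + u) - 1 * ⟪grad x, u⟫_ℝ) - (f (x + (0:ℝ) • u) - 0 * ⟪grad x, u⟫_ℝ) := by
    simp only [zero_smul, add_zero, one_mul, zero_mul, sub_zero]
    ring
  rw [heq]
  exact habs

private lemma normE_le_aux {q : ℕ} (w : EuclideanSpace ℝ (Fin q)) (c : ℝ) (hc : 0 ≤ c)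
    (h : ∀ j, |w j| ≤ c) : ‖w‖ ≤ Real.sqrt q * c := by
  rw [EuclideanSpace.norm_eq]
  have hsum : ∑ j, ‖w j‖ ^ 2 ≤ ∑ _j : Fin q, c ^ 2 := by
    apply Finset.sum_le_sum; intro j _
    rw [Real.norm_eq_abs]
    exact pow_le_pow_left₀ (abs_nonneg _) (h j) 2
  calc Real.sqrt (∑ j, ‖w j‖ ^ 2) ≤ Real.sqrt ((q : ℝ) * c ^ 2) := by
        apply Real.sqrt_le_sqrt; simpa using hsum
    _ = Real.sqrt q * c := by
        rw [Real.sqrt_mul (by positivity), Real.sqrt_sq hc]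

/-- First-order accuracy of the sparse Jacobian model in the spectral norm:
if in addition `σ ≤ γ₂/θ`, then `‖J_m − J(x)‖ ≤ κ_ej/θ` with
`κ_ej = (√(mp)/2) c₁ γ₂ κlg κbv²`. -/
theorem sparse_jacobian_model_first_order_accuracy {n m p : ℕ}
    (F : EuclideanSpace ℝ (Fin n) → EuclideanSpace ℝ (Fin m))
    (J : EuclideanSpace ℝ (Fin n) → Matrix (Fin m) (Fin n) ℝ)
    (hF : ∀ z i, HasGradientAt (fun w => F w i) (rowE (J z) i) z)
    (κlg : ℝ) (hκlg : 0 < κlg)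
    (hlip : ∀ i y z, ‖rowE (J y) i - rowE (J z) i‖ ≤ κlg * ‖y - z‖)
    (s : ℕ) (x : EuclideanSpace ℝ (Fin n))
    (hsparse : ∀ i, IsSparse s (rowE (J x) i))
    (σ : ℝ) (hσ : 0 < σ)
    (v : Fin p → EuclideanSpace ℝ (Fin n)) (κbv : ℝ)
    (hv : ∀ j, ‖v j‖ ≤ κbv)
    (A : Matrix (Fin p) (Fin n) ℝ) (hA : ∀ j i, A j i = v j i)
    (y : Fin m → EuclideanSpace ℝ (Fin p))
    (hy : ∀ i j, y i j = F (x + σ • v j) i - F x i)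
    (c₁ : ℝ) (hc₁ : 0 < c₁) (hrec : RecoveryProperty s A c₁)
    (g : Fin m → EuclideanSpace ℝ (Fin n))
    (hfeas : ∀ i, ‖mulVecE A (g i) - σ⁻¹ • y i‖ ≤ (Real.sqrt p / 2) * κlg * κbv ^ 2 * σ)
    (hmin : ∀ i, ∀ g' : EuclideanSpace ℝ (Fin n),
      ‖mulVecE A g' - σ⁻¹ • y i‖ ≤ (Real.sqrt p / 2) * κlg * κbv ^ 2 * σ →
      oneNorm (g i) ≤ oneNorm g')
    (Jm : Matrix (Fin m) (Fin n) ℝ) (hJm : ∀ i j, Jm i j = g i j)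
    (θ γ₂ : ℝ) (hθ : 0 < θ) (hγ₂ : 0 < γ₂) (hσθ : σ ≤ γ₂ / θ) :
    opNorm (Jm - J x) ≤ (Real.sqrt (m * p) / 2) * c₁ * γ₂ * κlg * κbv ^ 2 / θ := by
  have hκbv2 : (0:ℝ) ≤ κbv ^ 2 := sq_nonneg _
  set ξ : ℝ := (Real.sqrt p / 2) * κlg * κbv ^ 2 * σ with hξdef
  have hξ : 0 ≤ ξ := by positivity
  have hrow : ∀ i, ‖g i - rowE (J x) i‖ ≤ c₁ * ξ := by
    intro i
    apply hrec (rowE (J x) i) (hsparse i) ξ hξ (σ⁻¹ • y i) ?_ (g i) (hfeas i) (hmin i)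
    have hentry : ∀ j, |(mulVecE A (rowE (J x) i) - σ⁻¹ • y i) j|
        ≤ 1 / 2 * κlg * κbv ^ 2 * σ := by
      intro j
      have hq := quad_bound_aux (fun w => F w i) (fun z => rowE (J z) i) (fun z => hF z i)
        κlg hκlg.le (hlip i) x (σ • v j)
      have hIn : (inner ℝ (rowE (J x) i) (σ • v j) : ℝ) = σ * ∑ k, J x i k * v j k := by
        rw [real_inner_smul_right]
        simp [PiLp.inner_apply, rowE, mul_comm]
      have hnu : ‖σ • v j‖ ^ 2 ≤ σ ^ 2 * κbv ^ 2 := by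
        rw [norm_smul, mul_pow, Real.norm_eq_abs, sq_abs]
        have h1 : ‖v j‖ ^ 2 ≤ κbv ^ 2 := pow_le_pow_left₀ (norm_nonneg _) (hv j) 2
        nlinarith [sq_nonneg σ]
      have hqb : |F (x + σ • v j) i - F x i - σ * ∑ k, J x i k * v j k|
          ≤ κlg / 2 * (σ ^ 2 * κbv ^ 2) := by
        rw [← hIn]
        refine hq.trans ?_
        nlinarith [hκlg.le]
      have hval : (mulVecE A (rowE (J x) i) - σ⁻¹ • y i) j
          = σ⁻¹ * (σ * (∑ k, J x i k * v j k) - (F (x + σ • v j) i - F x i)) := by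
        have : (mulVecE A (rowE (J x) i) - σ⁻¹ • y i) j
            = (∑ k, A j k * rowE (J x) i k) - σ⁻¹ * y i j := by
          simp [mulVecE, Matrix.mulVec, dotProduct]
        rw [this, hy]
        have hAk : ∀ k, A j k * rowE (J x) i k = J x i k * v j k := by
          intro k; rw [hA]; simp [rowE]; ring
        rw [Finset.sum_congr rfl fun k _ => hAk k]
        field_simp
      rw [hval, abs_mul, abs_of_nonneg (inv_nonneg.mpr hσ.le), abs_sub_comm]
      calc σ⁻¹ * |F (x + σ • v j) i - F x i - σ * ∑ k, J x i k * v j k|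
          ≤ σ⁻¹ * (κlg / 2 * (σ ^ 2 * κbv ^ 2)) :=
            mul_le_mul_of_nonneg_left hqb (inv_nonneg.mpr hσ.le)
        _ = 1 / 2 * κlg * κbv ^ 2 * σ := by field_simp
    have hb : (0:ℝ) ≤ 1 / 2 * κlg * κbv ^ 2 * σ := by positivity
    calc ‖mulVecE A (rowE (J x) i) - σ⁻¹ • y i‖
        ≤ Real.sqrt p * (1 / 2 * κlg * κbv ^ 2 * σ) := normE_le_aux _ _ hb hentry
      _ = ξ := by rw [hξdef]; ring
  have hbound0 : (0:ℝ) ≤ Real.sqrt (m * p) / 2 * c₁ * γ₂ * κlg * κbv ^ 2 / θ := by positivity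
  apply Real.sSup_le _ hbound0
  rintro r ⟨w, hw, rfl⟩
  have hent : ∀ i, |(mulVecE (Jm - J x) w) i| ≤ c₁ * ξ := by
    intro i
    have hval : (mulVecE (Jm - J x) w) i = (inner ℝ (g i - rowE (J x) i) w : ℝ) := by
      simp only [mulVecE, WithLp.equiv_symm_apply, PiLp.toLp_apply, Matrix.mulVec, dotProduct,
        PiLp.inner_apply, RCLike.inner_apply, conj_trivial, Matrix.sub_apply,
        PiLp.sub_apply, WithLp.equiv_apply]
      apply Finset.sum_congr rfl
      intro k _
      rw [hJm]
      simp [rowE]; ring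
    rw [hval]
    calc |(inner ℝ (g i - rowE (J x) i) w : ℝ)| ≤ ‖g i - rowE (J x) i‖ * ‖w‖ :=
          abs_real_inner_le_norm _ _
      _ ≤ c₁ * ξ * 1 := mul_le_mul (hrow i) hw (norm_nonneg _) (by positivity)
      _ = c₁ * ξ := mul_one _
  have hnorm := normE_le_aux _ _ (by positivity) hent
  refine hnorm.trans ?_
  have hsq : Real.sqrt ((m : ℝ) * (p : ℝ)) = Real.sqrt m * Real.sqrt p :=
    Real.sqrt_mul (Nat.cast_nonneg m) p
  have hC : (0:ℝ) ≤ Real.sqrt m * Real.sqrt p / 2 * c₁ * κlg * κbv ^ 2 := by positivity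
  calc Real.sqrt m * (c₁ * ξ)
      = (Real.sqrt m * Real.sqrt p / 2 * c₁ * κlg * κbv ^ 2) * σ := by rw [hξdef]; ring
    _ ≤ (Real.sqrt m * Real.sqrt p / 2 * c₁ * κlg * κbv ^ 2) * (γ₂ / θ) :=
        mul_le_mul_of_nonneg_left hσθ hC
    _ = Real.sqrt ((m : ℝ) * (p : ℝ)) / 2 * c₁ * γ₂ * κlg * κbv ^ 2 / θ := by
        rw [hsq]; ring
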